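/- arXiv:1805.03041 — 2 statements merged into one kernel-verified Lean document; each statement's English description precedes it below -/
import Mathlib

section
/- Let p : (E,κ) → (B,λ) be a (κ,λ)-covering map, e ∈ E, e' ∈ N_κ(e,1) and e'' ∈ N_κ(e,2) with e' ≠ e''. Then p(e') ≠ p(e''). (Lemma 4.4) -/
open Set

/-- 2-adjacency on `ℤ` (the `l₁`-adjacency on `ℤ`): `x` and `y` are distinct with `|x - y| = 1`. -/
def adj2 (x y : ℤ) : Prop := |x - y| = 1

/-- 8-adjacency on `ℤ²` (the `l₂`-adjacency on `ℤ²`). -/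
def adj8 (p q : ℤ × ℤ) : Prop := p ≠ q ∧ |p.1 - q.1| ≤ 1 ∧ |p.2 - q.2| ≤ 1

/-- 26-adjacency on `ℤ³` (the `l₃`-adjacency on `ℤ³`). -/
def adj26 (p q : ℤ × ℤ × ℤ) : Prop :=
  p ≠ q ∧ |p.1 - q.1| ≤ 1 ∧ |p.2.1 - q.2.1| ≤ 1 ∧ |p.2.2 - q.2.2| ≤ 1

/-- An adjacency relation (as any `l_u`-adjacency is) is symmetric and irreflexive. -/
def IsAdjacency {A : Type*} (κ : A → A → Prop) : Prop := Symmetric κ ∧ Irreflexive κ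

/-- `f` is `(κ,λ)`-continuous on `X`: κ-adjacent points are mapped to equal or λ-adjacent
points. -/
def DigContOn {A B : Type*} (f : A → B) (X : Set A)
    (κ : A → A → Prop) (lam : B → B → Prop) : Prop :=
  ∀ x₀ ∈ X, ∀ x₁ ∈ X, κ x₀ x₁ → f x₀ = f x₁ ∨ lam (f x₀) (f x₁)

/-- `f : [0,m]_ℤ → X` is a digital `κ`-path of length `m` in `X`,
i.e. a `(2,κ)`-continuous map on `[0,m]_ℤ` with values in `X`. -/
def IsDigPath {A : Type*} (X : Set A) (κ : A → A → Prop) (m : ℕ) (f : ℤ → A) : Prop :=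
  (∀ i ∈ Icc (0 : ℤ) (m : ℤ), f i ∈ X) ∧
  ∀ i ∈ Icc (0 : ℤ) (m : ℤ), ∀ j ∈ Icc (0 : ℤ) (m : ℤ),
    adj2 i j → f i = f j ∨ κ (f i) (f j)

/-- There is a digital `κ`-path of length `m` in `X` from `x` to `y`. -/
def ReachIn {A : Type*} (X : Set A) (κ : A → A → Prop) (x y : A) (m : ℕ) : Prop :=
  ∃ f : ℤ → A, IsDigPath X κ m f ∧ f 0 = x ∧ f (m : ℤ) = y

/-- `X` is `κ`-connected: every two of its points are joined by a `κ`-path in `X`. -/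
def DigConnected {A : Type*} (X : Set A) (κ : A → A → Prop) : Prop :=
  ∀ x ∈ X, ∀ y ∈ X, ∃ m : ℕ, ReachIn X κ x y m

/-- The `κ`-neighborhood `N_κ(e₀, ε)` of `e₀` in `X` with radius `ε`:
points of `X` whose shortest `κ`-path distance from `e₀` is at most `ε`, together with `e₀`. -/
def Nbhd {A : Type*} (X : Set A) (κ : A → A → Prop) (e₀ : A) (ε : ℕ) : Set A :=
  {e ∈ X | ∃ m : ℕ, m ≤ ε ∧ ReachIn X κ e₀ e m} ∪ {e₀}

/-- The restriction of `f` to `X` is a `(κ,λ)`-isomorphism onto `Y`: a `(κ,λ)`-continuous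
bijection of `X` onto `Y` whose inverse is `(λ,κ)`-continuous. -/
def IsDigIsoOn {A B : Type*} (f : A → B) (X : Set A) (Y : Set B)
    (κ : A → A → Prop) (lam : B → B → Prop) : Prop :=
  MapsTo f X Y ∧ InjOn f X ∧ SurjOn f X Y ∧ DigContOn f X κ lam ∧
  ∀ x₀ ∈ X, ∀ x₁ ∈ X, lam (f x₀) (f x₁) → x₀ = x₁ ∨ κ x₀ x₁

/-- `p` is a radius-`n` digital `(κ,λ)`-covering map of `E` onto `Bs`
(`n = 1` gives the usual digital `(κ,λ)`-covering map): a `(κ,λ)`-continuous surjection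
such that for each `b ∈ Bs` there is a set `F` of points of the fiber over `b` whose radius-`n`
neighborhoods are pairwise disjoint, partition `p⁻¹(N_λ(b,n))`, and are each mapped
isomorphically onto `N_λ(b,n)` by `p`. -/
def IsRadiusCovering {A B : Type*} (p : A → B) (E : Set A) (Bs : Set B)
    (κ : A → A → Prop) (lam : B → B → Prop) (n : ℕ) : Prop :=
  MapsTo p E Bs ∧ SurjOn p E Bs ∧ DigContOn p E κ lam ∧
  ∀ b ∈ Bs, ∃ F : Set A, F ⊆ {e ∈ E | p e = b} ∧
    (E ∩ p ⁻¹' (Nbhd Bs lam b n) = ⋃ e ∈ F, Nbhd E κ e n) ∧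
    F.Pairwise (fun e e' => Disjoint (Nbhd E κ e n) (Nbhd E κ e' n)) ∧
    ∀ e ∈ F, IsDigIsoOn p (Nbhd E κ e n) (Nbhd Bs lam b n) κ lam

/-- `p` is a radius-`n` local `(κ,λ)`-isomorphism (`n = 1` gives the usual local
`(κ,λ)`-isomorphism): for every `e ∈ E` the restriction of `p` to `N_κ(e,n)` is a
`(κ,λ)`-isomorphism onto `N_λ(p e, n)`. -/
def IsLocalIso {A B : Type*} (p : A → B) (E : Set A) (Bs : Set B)
    (κ : A → A → Prop) (lam : B → B → Prop) (n : ℕ) : Prop :=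
  ∀ e ∈ E, IsDigIsoOn p (Nbhd E κ e n) (Nbhd Bs lam (p e) n) κ lam

/-- `p` has the digital path lifting property: every `λ`-path `a` in `Bs` and every point
`e ∈ E` of the fiber over `a 0` admit a lifting of `a` beginning at `e`. -/
def PathLiftingProp {A B : Type*} (p : A → B) (E : Set A) (Bs : Set B)
    (κ : A → A → Prop) (lam : B → B → Prop) : Prop :=
  ∀ (m : ℕ) (a : ℤ → B), IsDigPath Bs lam m a → ∀ e ∈ E, p e = a 0 →
    ∃ g : ℤ → A, IsDigPath E κ m g ∧ (∀ i ∈ Icc (0 : ℤ) (m : ℤ), p (g i) = a i) ∧ g 0 = e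

/-- `p` has the uniqueness of digital path lifts property: two `κ`-paths in `E` with the
same projection and the same starting point coincide (on their domain `[0,m]_ℤ`). -/
def UniqLiftsProp {A B : Type*} (p : A → B) (E : Set A) (κ : A → A → Prop) : Prop :=
  ∀ (m : ℕ) (a b : ℤ → A), IsDigPath E κ m a → IsDigPath E κ m b →
    (∀ i ∈ Icc (0 : ℤ) (m : ℤ), p (a i) = p (b i)) → a 0 = b 0 →
    EqOn a b (Icc (0 : ℤ) (m : ℤ))

/-- `p` has the unique path lifting property (u.p.l.): both the path lifting property and
the uniqueness of path lifts property. -/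
def UPL {A B : Type*} (p : A → B) (E : Set A) (Bs : Set B)
    (κ : A → A → Prop) (lam : B → B → Prop) : Prop :=
  PathLiftingProp p E Bs κ lam ∧ UniqLiftsProp p E κ

/-- `e` is a conciliator point for `p`: there are `e', e'' ∈ N_κ(e,1)` which are not
`κ`-adjacent but whose images are `λ`-adjacent. -/
def IsConciliator {A B : Type*} (p : A → B) (E : Set A)
    (κ : A → A → Prop) (lam : B → B → Prop) (e : A) : Prop :=
  ∃ e' ∈ Nbhd E κ e 1, ∃ e'' ∈ Nbhd E κ e 1, ¬ κ e' e'' ∧ lam (p e') (p e'')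

/-- `f : [0,m]_ℤ → X` is a simple `κ`-loop of length `m` in `X`: a closed `κ`-path such that
`f 0, …, f (m-1)` are pairwise distinct and `f i`, `f j` are `κ`-adjacent iff
`j = i ± 1 (mod m)`. -/
def IsSimpleLoop {A : Type*} (X : Set A) (κ : A → A → Prop) (m : ℕ) (f : ℤ → A) : Prop :=
  IsDigPath X κ m f ∧ f 0 = f (m : ℤ) ∧
  (∀ i ∈ Ico (0 : ℤ) (m : ℤ), ∀ j ∈ Ico (0 : ℤ) (m : ℤ), f i = f j → i = j) ∧
  ∀ i ∈ Ico (0 : ℤ) (m : ℤ), ∀ j ∈ Ico (0 : ℤ) (m : ℤ),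
    (κ (f i) (f j) ↔ (j % (m : ℤ) = (i + 1) % (m : ℤ) ∨ j % (m : ℤ) = (i - 1) % (m : ℤ)))

lemma nbhd_self {A : Type*} (X : Set A) (κ : A → A → Prop) (e₀ : A) (ε : ℕ) :
    e₀ ∈ Nbhd X κ e₀ ε := Or.inr rfl

lemma mem_nbhd_of_adj {A : Type*} {X : Set A} {κ : A → A → Prop} (hsym : Symmetric κ)
    {x y : A} (hx : x ∈ X) (hy : y ∈ X) (hxy : κ x y) : y ∈ Nbhd X κ x 1 := by
  refine Or.inl ⟨hy, 1, le_refl 1, fun i => if i ≤ 0 then x else y, ⟨?_, ?_⟩, by norm_num,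
    by norm_num⟩
  · intro i _; by_cases h : i ≤ 0 <;> simp [h, hx, hy]
  · intro i hi j hj hij
    simp only [Nat.cast_one, mem_Icc] at hi hj
    have hij' : i - j = 1 ∨ i - j = -1 := (abs_eq (by norm_num)).mp hij
    have : (i = 0 ∧ j = 1) ∨ (i = 1 ∧ j = 0) := by omega
    rcases this with ⟨h1, h2⟩ | ⟨h1, h2⟩ <;> subst h1 <;> subst h2 <;> norm_num
    · exact Or.inr hxy
    · exact Or.inr (hsym hxy)

lemma nbhd_one_elim {A : Type*} {X : Set A} {κ : A → A → Prop}
    {x y : A} (hy : y ∈ Nbhd X κ x 1) : y = x ∨ (y ∈ X ∧ κ x y) := by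
  rcases hy with ⟨hyX, m, hm, f, ⟨hfX, hadj⟩, h0, hm'⟩ | h
  · interval_cases m
    · left; rw [← hm', Nat.cast_zero, h0]
    · have h01 := hadj 0 (by norm_num) 1 (by norm_num) (by unfold adj2; norm_num)
      rw [Nat.cast_one] at hm'
      rw [h0, hm'] at h01
      rcases h01 with h | h
      · exact Or.inl h.symm
      · exact Or.inr ⟨hyX, h⟩
  · exact Or.inl h

lemma nbhd_two_elim {A : Type*} {X : Set A} {κ : A → A → Prop}
    {x y : A} (hy : y ∈ Nbhd X κ x 2) :
    y = x ∨ (y ∈ X ∧ κ x y) ∨ (y ∈ X ∧ ∃ z ∈ X, κ x z ∧ κ z y) := by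
  rcases hy with ⟨hyX, m, hm, f, ⟨hfX, hadj⟩, h0, hm'⟩ | h
  · interval_cases m
    · left; rw [← hm', Nat.cast_zero, h0]
    · have h01 := hadj 0 (by norm_num) 1 (by norm_num) (by unfold adj2; norm_num)
      rw [Nat.cast_one] at hm'
      rw [h0, hm'] at h01
      rcases h01 with h | h
      · exact Or.inl h.symm
      · exact Or.inr (Or.inl ⟨hyX, h⟩)
    · have h01 := hadj 0 (by norm_num) 1 (by norm_num) (by unfold adj2; norm_num)
      have h12 := hadj 1 (by norm_num) 2 (by norm_num) (by unfold adj2; norm_num)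
      have hz : f 1 ∈ X := hfX 1 (by norm_num)
      rw [show ((2 : ℕ) : ℤ) = 2 by norm_num] at hm'
      rw [h0] at h01
      rw [hm'] at h12
      rcases h01 with h1 | h1 <;> rcases h12 with h2 | h2
      · left; rw [← h2, ← h1]
      · right; left; exact ⟨hyX, h1 ▸ h2⟩
      · right; left; exact ⟨hyX, h2 ▸ h1⟩
      · right; right; exact ⟨hyX, f 1, hz, h1, h2⟩
  · exact Or.inl h

lemma cov_mem_fiber_set {A B : Type*} {E : Set A} {Bs : Set B}
    {κ : A → A → Prop} {lam : B → B → Prop} {p : A → B}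
    (hcov : IsRadiusCovering p E Bs κ lam 1)
    {F : Set A} {b : B}
    (hFsub : F ⊆ {e ∈ E | p e = b})
    (hpart : E ∩ p ⁻¹' (Nbhd Bs lam b 1) = ⋃ e ∈ F, Nbhd E κ e 1)
    (hiso : ∀ e ∈ F, IsDigIsoOn p (Nbhd E κ e 1) (Nbhd Bs lam b 1) κ lam)
    {z : A} (hz : z ∈ E) (hpz : p z = b) : z ∈ F := by
  have hz' : z ∈ E ∩ p ⁻¹' (Nbhd Bs lam b 1) := by
    refine ⟨hz, ?_⟩
    rw [mem_preimage, hpz]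
    exact nbhd_self Bs lam b 1
  rw [hpart] at hz'
  obtain ⟨g, hgF, hzg⟩ := mem_iUnion₂.mp hz'
  have hpg : p g = b := (hFsub hgF).2
  have : z = g := (hiso g hgF).2.1 hzg (nbhd_self E κ g 1) (by rw [hpz, hpg])
  exact this ▸ hgF

lemma cov_center {A B : Type*} {E : Set A} {Bs : Set B}
    {κ : A → A → Prop} {lam : B → B → Prop} {p : A → B}
    (hcov : IsRadiusCovering p E Bs κ lam 1)
    {x : A} (hx : x ∈ E) :
    IsDigIsoOn p (Nbhd E κ x 1) (Nbhd Bs lam (p x) 1) κ lam := by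
  obtain ⟨hmaps, hsurj, hcont, hF⟩ := hcov
  obtain ⟨F, hFsub, hpart, hdisj, hiso⟩ := hF (p x) (hmaps hx)
  have hxF : x ∈ F :=
    cov_mem_fiber_set ⟨hmaps, hsurj, hcont, hF⟩ hFsub hpart hiso hx rfl
  exact hiso x hxF

lemma cov_disjoint {A B : Type*} {E : Set A} {Bs : Set B}
    {κ : A → A → Prop} {lam : B → B → Prop} {p : A → B}
    (hcov : IsRadiusCovering p E Bs κ lam 1)
    {x y : A} (hx : x ∈ E) (hy : y ∈ E) (hpxy : p x = p y) (hne : x ≠ y) :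
    Disjoint (Nbhd E κ x 1) (Nbhd E κ y 1) := by
  obtain ⟨hmaps, hsurj, hcont, hF⟩ := hcov
  obtain ⟨F, hFsub, hpart, hdisj, hiso⟩ := hF (p x) (hmaps hx)
  have hxF : x ∈ F :=
    cov_mem_fiber_set ⟨hmaps, hsurj, hcont, hF⟩ hFsub hpart hiso hx rfl
  have hyF : y ∈ F :=
    cov_mem_fiber_set ⟨hmaps, hsurj, hcont, hF⟩ hFsub hpart hiso hy hpxy.symm
  exact hdisj hxF hyF hne

/-- Lemma 4.4: if `p` is a `(κ,λ)`-covering map, `e ∈ E`, `e' ∈ N_κ(e,1)`,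
`e'' ∈ N_κ(e,2)` and `e' ≠ e''`, then `p e' ≠ p e''`. -/
theorem lem_4_4 {N M : ℕ} (E : Set (Fin N → ℤ)) (Bs : Set (Fin M → ℤ))
    (κ : (Fin N → ℤ) → (Fin N → ℤ) → Prop) (lam : (Fin M → ℤ) → (Fin M → ℤ) → Prop)
    (hκ : IsAdjacency κ) (hlam : IsAdjacency lam)
    (p : (Fin N → ℤ) → (Fin M → ℤ))
    (hcov : IsRadiusCovering p E Bs κ lam 1)
    (e e' e'' : Fin N → ℤ) (he : e ∈ E)
    (he' : e' ∈ Nbhd E κ e 1) (he'' : e'' ∈ Nbhd E κ e 2) (hne : e' ≠ e'') :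
    p e' ≠ p e'' := by
  intro hpp
  obtain ⟨hsym, hirr⟩ := hκ
  obtain ⟨maps, inj, surj, cont, rev⟩ := cov_center hcov he
  have he'E : e' ∈ E := by
    rcases nbhd_one_elim he' with h | ⟨h, _⟩
    · exact h ▸ he
    · exact h
  have kill1 : e'' ∈ Nbhd E κ e 1 → False := fun h'' => hne (inj he' h'' hpp)
  rcases nbhd_two_elim he'' with h | ⟨h''E, hadj⟩ | ⟨h''E, z, hzE, hez, hze''⟩
  · exact kill1 (h ▸ nbhd_self E κ e 1)
  · exact kill1 (mem_nbhd_of_adj hsym he h''E hadj)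
  · have hzN : z ∈ Nbhd E κ e 1 := mem_nbhd_of_adj hsym he hzE hez
    have hdisjC : ¬ κ e' e'' := fun hk => by
      have hd := cov_disjoint hcov he'E h''E hpp hne
      exact Set.disjoint_left.mp hd (mem_nbhd_of_adj hsym he'E h''E hk)
        (nbhd_self E κ e'' 1)
    rcases hcov.2.2.1 z hzE e'' h''E hze'' with heq | hlam
    · have hz' : z = e' := inj hzN he' (heq.trans hpp.symm)
      exact hdisjC (hz' ▸ hze'')
    · rw [← hpp] at hlam
      rcases rev z hzN e' he' hlam with heq | hk
      · exact hdisjC (heq ▸ hze'')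
      · have hinjz := (cov_center hcov hzE).2.1
        have he'z : e' ∈ Nbhd E κ z 1 := mem_nbhd_of_adj hsym hzE he'E hk
        have he''z : e'' ∈ Nbhd E κ z 1 := mem_nbhd_of_adj hsym hzE h''E hze''
        exact hne (hinjz he'z he''z hpp)
end

section
/- Let p : (E,κ) → (B,λ) be a (κ,λ)-covering map between connected digital images and let n ∈ ℕ. Then p is a radius n covering map if and only if every lifting of every simple λ-loop in B of length at most 2n+1 is a simple κ-loop in E. (Theorem 4.5) -/
open Set

section AuxBasics

variable {A B : Type*} {X : Set A} {κ : A → A → Prop} {lam : B → B → Prop}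

lemma adj2_iff {i j : ℤ} : adj2 i j ↔ j = i + 1 ∨ i = j + 1 := by
  unfold adj2
  rw [abs_eq (by norm_num : (0:ℤ) ≤ 1)]
  omega

lemma isDigPath_step {m : ℕ} {f : ℤ → A} (h : IsDigPath X κ m f) {i : ℤ}
    (h0 : 0 ≤ i) (h1 : i + 1 ≤ (m:ℤ)) : f i = f (i+1) ∨ κ (f i) (f (i+1)) :=
  h.2 i ⟨h0, by omega⟩ (i+1) ⟨by omega, h1⟩ (adj2_iff.mpr (Or.inl rfl))

/-- a one-step "path" function -/
def mkStep (x y : A) : ℤ → A := fun i => if i ≤ 0 then x else y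

lemma mkStep_zero (x y : A) : mkStep x y 0 = x := by simp [mkStep]

lemma mkStep_one (x y : A) : mkStep x y 1 = y := by norm_num [mkStep]

lemma isDigPath_mkStep (hsym : Symmetric κ) {x y : A} (hx : x ∈ X) (hy : y ∈ X)
    (hxy : x = y ∨ κ x y) : IsDigPath X κ 1 (mkStep x y) := by
  constructor
  · intro i _
    unfold mkStep
    split_ifs <;> assumption
  · intro i hi j hj hadj
    rw [adj2_iff] at hadj
    simp only [mem_Icc] at hi hj
    have : (i = 0 ∧ j = 1) ∨ (i = 1 ∧ j = 0) := by push_cast at hi hj; omega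
    rcases this with ⟨rfl, rfl⟩ | ⟨rfl, rfl⟩
    · rw [mkStep_zero, mkStep_one]; exact hxy
    · rw [mkStep_zero, mkStep_one]
      exact hxy.imp Eq.symm (fun h => hsym h)

/-- concatenation of two path functions, the first one living on `[0,k]` -/
def pconcat (k : ℤ) (f₁ f₂ : ℤ → A) : ℤ → A := fun i => if i ≤ k then f₁ i else f₂ (i - k)

lemma pconcat_left {k : ℤ} {f₁ f₂ : ℤ → A} {i : ℤ} (h : i ≤ k) : pconcat k f₁ f₂ i = f₁ i :=
  if_pos h

lemma pconcat_right {k : ℤ} {f₁ f₂ : ℤ → A} (hseam : f₁ k = f₂ 0) {i : ℤ} (h : k ≤ i) :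
    pconcat k f₁ f₂ i = f₂ (i - k) := by
  rcases eq_or_lt_of_le h with rfl | hlt
  · rw [pconcat_left le_rfl, hseam, sub_self]
  · exact if_neg (by omega)

lemma isDigPath_pconcat {m₁ m₂ : ℕ} {f₁ f₂ : ℤ → A} (h₁ : IsDigPath X κ m₁ f₁)
    (h₂ : IsDigPath X κ m₂ f₂) (hseam : f₁ (m₁:ℤ) = f₂ 0) :
    IsDigPath X κ (m₁ + m₂) (pconcat (m₁:ℤ) f₁ f₂) := by
  constructor
  · intro i hi
    simp only [mem_Icc] at hi
    push_cast at hi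
    by_cases h : i ≤ (m₁:ℤ)
    · rw [pconcat_left h]
      exact h₁.1 i (mem_Icc.mpr ⟨hi.1, h⟩)
    · rw [pconcat_right hseam (le_of_not_ge h)]
      exact h₂.1 _ (mem_Icc.mpr ⟨by omega, by omega⟩)
  · intro i hi j hj hadj
    rw [adj2_iff] at hadj
    simp only [mem_Icc] at hi hj
    push_cast at hi hj
    by_cases hi' : i ≤ (m₁:ℤ) <;> by_cases hj' : j ≤ (m₁:ℤ)
    · rw [pconcat_left hi', pconcat_left hj']
      exact h₁.2 i ⟨hi.1, hi'⟩ j ⟨hj.1, hj'⟩ (adj2_iff.mpr hadj)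
    · -- i ≤ m₁ < j hence j = i+1, i = m₁
      have him : i = (m₁:ℤ) := by omega
      have hjm : j - (m₁:ℤ) = 1 := by omega
      rw [pconcat_left hi', pconcat_right hseam (by omega), him, hseam, hjm]
      exact h₂.2 0 ⟨le_rfl, by omega⟩ 1 ⟨by norm_num, by omega⟩ (adj2_iff.mpr (by norm_num))
    · have hjm : j = (m₁:ℤ) := by omega
      have him : i - (m₁:ℤ) = 1 := by omega
      rw [pconcat_right hseam (by omega), pconcat_left hj', hjm, hseam, him]
      exact h₂.2 1 ⟨by norm_num, by omega⟩ 0 ⟨le_rfl, by omega⟩ (adj2_iff.mpr (by norm_num))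
    · rw [pconcat_right hseam (by omega), pconcat_right hseam (by omega)]
      exact h₂.2 (i - m₁) ⟨by omega, by omega⟩ (j - m₁) ⟨by omega, by omega⟩
        (adj2_iff.mpr (by omega))

lemma isDigPath_shift {m : ℕ} {f : ℤ → A} (h : IsDigPath X κ m f) (k : ℤ) (m' : ℕ)
    (hk : 0 ≤ k) (hkm : k + (m':ℤ) ≤ (m:ℤ)) : IsDigPath X κ m' (fun i => f (i + k)) := by
  constructor
  · intro i hi
    simp only [mem_Icc] at hi
    exact h.1 (i + k) (mem_Icc.mpr ⟨by omega, by omega⟩)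
  · intro i hi j hj hadj
    rw [adj2_iff] at hadj
    simp only [mem_Icc] at hi hj
    exact h.2 (i + k) ⟨by omega, by omega⟩ (j + k) ⟨by omega, by omega⟩
      (adj2_iff.mpr (by omega))

/-- named shift, to keep unification first-order -/
def shiftf {A : Type*} (f : ℤ → A) (k : ℤ) : ℤ → A := fun t => f (t + k)

lemma shiftf_apply {A : Type*} (f : ℤ → A) (k t : ℤ) : shiftf f k t = f (t + k) := rfl

lemma isDigPath_shiftf {m : ℕ} {f : ℤ → A} (h : IsDigPath X κ m f) (k : ℤ) (m' : ℕ)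
    (hk : 0 ≤ k) (hkm : k + (m':ℤ) ≤ (m:ℤ)) : IsDigPath X κ m' (shiftf f k) :=
  isDigPath_shift h k m' hk hkm

lemma isDigPath_reverse {m : ℕ} {f : ℤ → A} (h : IsDigPath X κ m f) :
    IsDigPath X κ m (fun i => f ((m:ℤ) - i)) := by
  constructor
  · intro i hi
    simp only [mem_Icc] at hi
    exact h.1 ((m:ℤ) - i) (mem_Icc.mpr ⟨by omega, by omega⟩)
  · intro i hi j hj hadj
    rw [adj2_iff] at hadj
    simp only [mem_Icc] at hi hj
    exact h.2 ((m:ℤ) - i) ⟨by omega, by omega⟩ ((m:ℤ) - j) ⟨by omega, by omega⟩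
      (adj2_iff.mpr (by omega))

lemma isDigPath_prefix {m m' : ℕ} {f : ℤ → A} (h : IsDigPath X κ m f) (hm : m' ≤ m) :
    IsDigPath X κ m' f := by
  constructor
  · intro i hi
    simp only [mem_Icc] at hi
    exact h.1 i (mem_Icc.mpr ⟨hi.1, by omega⟩)
  · intro i hi j hj hadj
    simp only [mem_Icc] at hi hj
    exact h.2 i ⟨hi.1, by omega⟩ j ⟨hj.1, by omega⟩ hadj

lemma reachIn_refl {x : A} (hx : x ∈ X) : ReachIn X κ x x 0 :=
  ⟨fun _ => x, ⟨fun _ _ => hx, fun _ _ _ _ _ => Or.inl rfl⟩, rfl, rfl⟩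

lemma reachIn_single (hsym : Symmetric κ) {x y : A} (hx : x ∈ X) (hy : y ∈ X)
    (hxy : x = y ∨ κ x y) : ReachIn X κ x y 1 :=
  ⟨mkStep x y, isDigPath_mkStep hsym hx hy hxy, mkStep_zero x y, by
    rw [Nat.cast_one]; exact mkStep_one x y⟩

lemma reachIn_symm {x y : A} {m : ℕ} (h : ReachIn X κ x y m) : ReachIn X κ y x m := by
  obtain ⟨f, hf, h0, hm⟩ := h
  exact ⟨fun i => f ((m:ℤ) - i), isDigPath_reverse hf, by simpa using hm, by simpa using h0⟩

lemma reachIn_trans {x y z : A} {m₁ m₂ : ℕ} (h₁ : ReachIn X κ x y m₁)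
    (h₂ : ReachIn X κ y z m₂) : ReachIn X κ x z (m₁ + m₂) := by
  obtain ⟨f₁, hf₁, h₁0, h₁m⟩ := h₁
  obtain ⟨f₂, hf₂, h₂0, h₂m⟩ := h₂
  have hseam : f₁ (m₁:ℤ) = f₂ 0 := by rw [h₁m, h₂0]
  refine ⟨pconcat (m₁:ℤ) f₁ f₂, isDigPath_pconcat hf₁ hf₂ hseam, ?_, ?_⟩
  · rw [pconcat_left (by positivity : (0:ℤ) ≤ (m₁:ℤ))]; exact h₁0
  · rw [pconcat_right hseam (by push_cast; omega)]
    push_cast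
    rw [add_sub_cancel_left]
    exact_mod_cast h₂m

lemma reachIn_src {x y : A} {m : ℕ} (h : ReachIn X κ x y m) : x ∈ X := by
  obtain ⟨f, hf, h0, _⟩ := h
  rw [← h0]
  exact hf.1 0 (mem_Icc.mpr ⟨le_rfl, by positivity⟩)

lemma reachIn_tgt {x y : A} {m : ℕ} (h : ReachIn X κ x y m) : y ∈ X := by
  obtain ⟨f, hf, _, hm⟩ := h
  rw [← hm]
  exact hf.1 _ (mem_Icc.mpr ⟨by positivity, le_rfl⟩)

lemma reachIn_le_one {x y : A} {m : ℕ} (h : ReachIn X κ x y m) (hm : m ≤ 1) :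
    x = y ∨ κ x y := by
  obtain ⟨f, hf, h0, hm'⟩ := h
  interval_cases m
  · left; rw [← h0, ← hm']; norm_num
  · have := isDigPath_step hf (le_refl (0:ℤ)) (by norm_num)
    rw [h0] at this
    rw [show ((1:ℕ):ℤ) = (0:ℤ) + 1 by norm_num] at hm'
    rw [hm'] at this
    exact this

lemma self_mem_nbhd (X : Set A) (κ : A → A → Prop) (e₀ : A) (ε : ℕ) :
    e₀ ∈ Nbhd X κ e₀ ε :=
  Set.mem_union_right _ rfl

lemma mem_nbhd_iff {e₀ x : A} {ε : ℕ} (he₀ : e₀ ∈ X) :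
    x ∈ Nbhd X κ e₀ ε ↔ ∃ m : ℕ, m ≤ ε ∧ ReachIn X κ e₀ x m := by
  constructor
  · intro h
    rcases h with ⟨_, m, hm, hr⟩ | h
    · exact ⟨m, hm, hr⟩
    · rw [mem_singleton_iff] at h
      subst h
      exact ⟨0, Nat.zero_le _, reachIn_refl he₀⟩
  · rintro ⟨m, hm, hr⟩
    exact Set.mem_union_left _ ⟨reachIn_tgt hr, m, hm, hr⟩

lemma nbhd_subset {e₀ : A} {ε : ℕ} (he₀ : e₀ ∈ X) : Nbhd X κ e₀ ε ⊆ X := by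
  intro x hx
  rw [mem_nbhd_iff he₀] at hx
  obtain ⟨m, _, hr⟩ := hx
  exact reachIn_tgt hr

lemma mem_nbhd_one (hsym : Symmetric κ) {e₀ x : A} (he₀ : e₀ ∈ X) :
    x ∈ Nbhd X κ e₀ 1 ↔ x ∈ X ∧ (x = e₀ ∨ κ e₀ x) := by
  rw [mem_nbhd_iff he₀]
  constructor
  · rintro ⟨m, hm, hr⟩
    exact ⟨reachIn_tgt hr, (reachIn_le_one hr hm).imp Eq.symm id⟩
  · rintro ⟨hx, h⟩
    rcases h with rfl | h
    · exact ⟨0, Nat.zero_le _, reachIn_refl he₀⟩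
    · exact ⟨1, le_rfl, reachIn_single hsym he₀ hx (Or.inr h)⟩

lemma isDigPath_map {E : Set A} {Bs : Set B} {p : A → B} (hmap : MapsTo p E Bs)
    (hcont : DigContOn p E κ lam) {m : ℕ} {f : ℤ → A} (h : IsDigPath E κ m f) :
    IsDigPath Bs lam m (fun i => p (f i)) := by
  constructor
  · intro i hi; exact hmap (h.1 i hi)
  · intro i hi j hj hadj
    rcases h.2 i hi j hj hadj with he | hk
    · exact Or.inl (congrArg p he)
    · exact hcont _ (h.1 i hi) _ (h.1 j hj) hk

lemma reachIn_map {E : Set A} {Bs : Set B} {p : A → B} (hmap : MapsTo p E Bs)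
    (hcont : DigContOn p E κ lam) {x y : A} {m : ℕ} (h : ReachIn E κ x y m) :
    ReachIn Bs lam (p x) (p y) m := by
  obtain ⟨f, hf, h0, hm⟩ := h
  exact ⟨fun i => p (f i), isDigPath_map hmap hcont hf, by simp only []; rw [h0], by simp only []; rw [hm]⟩

lemma emod_succ_cases {L i j : ℤ} (hi : 0 ≤ i) (hiL : i < L) (hj : 0 ≤ j) (hjL : j < L) :
    j % L = (i + 1) % L ↔ (j = i + 1 ∨ (i = L - 1 ∧ j = 0)) := by
  have hjm : j % L = j := Int.emod_eq_of_lt hj hjL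
  rcases eq_or_lt_of_le (by omega : i + 1 ≤ L) with hE | hlt
  · rw [hjm, ← hE, Int.emod_self]
    omega
  · rw [hjm, Int.emod_eq_of_lt (by omega) hlt]
    omega

lemma neg_one_emod {L : ℤ} (hL : 1 ≤ L) : (-1 : ℤ) % L = L - 1 := by
  have h1 : (L - 1) % L = L - 1 := Int.emod_eq_of_lt (by omega) (by omega)
  have h2 : (-1 + L * 1) % L = (-1 : ℤ) % L := Int.add_mul_emod_self_left (-1) L 1
  rw [show (-1 + L * 1 : ℤ) = L - 1 by ring] at h2
  rw [← h2, h1]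

lemma emod_pred_cases {L i j : ℤ} (hi : 0 ≤ i) (hiL : i < L) (hj : 0 ≤ j) (hjL : j < L) :
    j % L = (i - 1) % L ↔ (j = i - 1 ∨ (i = 0 ∧ j = L - 1)) := by
  have hjm : j % L = j := Int.emod_eq_of_lt hj hjL
  rcases eq_or_lt_of_le hi with hE | hlt
  · rw [hjm, ← hE, zero_sub, neg_one_emod (by omega)]
    omega
  · rw [hjm, Int.emod_eq_of_lt (by omega) (by omega)]
    omega

end AuxBasics

section AuxCovering

variable {A B : Type*} {E : Set A} {Bs : Set B} {κ : A → A → Prop} {lam : B → B → Prop}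
  {p : A → B}

/-- For a radius-1 covering, every point of `E` is the center of its own sheet. -/
lemma sheet_iso (hcov : IsRadiusCovering p E Bs κ lam 1) :
    ∀ x ∈ E, IsDigIsoOn p (Nbhd E κ x 1) (Nbhd Bs lam (p x) 1) κ lam := by
  intro x hx
  obtain ⟨hmap, hsurj, hcont, hloc⟩ := hcov
  obtain ⟨F, hF, hcover, hdisj, hiso⟩ := hloc (p x) (hmap hx)
  have hxmem : x ∈ E ∩ p ⁻¹' (Nbhd Bs lam (p x) 1) :=
    ⟨hx, self_mem_nbhd Bs lam (p x) 1⟩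
  rw [hcover] at hxmem
  simp only [mem_iUnion] at hxmem
  obtain ⟨e, heF, hxe⟩ := hxmem
  have hpe : p e = p x := (hF heF).2
  have iso := hiso e heF
  have hxeq : x = e := iso.2.1 hxe (self_mem_nbhd E κ e 1) hpe.symm
  subst hxeq
  exact iso

lemma uniq_lifts (hκ : IsAdjacency κ) (hcov : IsRadiusCovering p E Bs κ lam 1) :
    UniqLiftsProp p E κ := by
  intro m a b ha hb hproj h0
  have key : ∀ k : ℕ, (k:ℤ) ≤ (m:ℤ) → a (k:ℤ) = b (k:ℤ) := by
    intro k
    induction k with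
    | zero => intro _; simpa using h0
    | succ k ih =>
      intro hk1
      push_cast at hk1
      have hk : (k:ℤ) ≤ (m:ℤ) := by omega
      have hab := ih hk
      have hx : a (k:ℤ) ∈ E := ha.1 _ ⟨by positivity, hk⟩
      have iso := sheet_iso hcov _ hx
      have h1 : a ((k:ℤ)+1) ∈ Nbhd E κ (a (k:ℤ)) 1 := by
        rw [mem_nbhd_one hκ.1 hx]
        exact ⟨ha.1 _ ⟨by omega, by omega⟩,
          (isDigPath_step ha (by positivity) (by omega)).imp Eq.symm id⟩
      have h2 : b ((k:ℤ)+1) ∈ Nbhd E κ (a (k:ℤ)) 1 := by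
        rw [hab, mem_nbhd_one hκ.1 (hab ▸ hb.1 _ ⟨by positivity, hk⟩)]
        exact ⟨hb.1 _ ⟨by omega, by omega⟩,
          (isDigPath_step hb (by positivity) (by omega)).imp Eq.symm id⟩
      have hpeq : p (a ((k:ℤ)+1)) = p (b ((k:ℤ)+1)) := hproj _ ⟨by positivity, by omega⟩
      have := iso.2.1 h1 h2 hpeq
      push_cast
      exact this
  intro i hi
  simp only [mem_Icc] at hi
  have hi' : i = ((i.toNat : ℕ) : ℤ) := (Int.toNat_of_nonneg hi.1).symm
  rw [hi']
  exact key _ (by rw [← hi']; exact hi.2)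

open Classical in
/-- the recursively defined lift sequence -/
noncomputable def liftFun (E : Set A) (κ : A → A → Prop) (p : A → B) (a : ℤ → B)
    (e : A) : ℕ → A
  | 0 => e
  | (k+1) =>
      if h : ∃ y, y ∈ Nbhd E κ (liftFun E κ p a e k) 1 ∧ p y = a ((k:ℤ)+1)
      then h.choose else liftFun E κ p a e k

lemma path_lift (hκ : IsAdjacency κ) (hlam : IsAdjacency lam)
    (hcov : IsRadiusCovering p E Bs κ lam 1) : PathLiftingProp p E Bs κ lam := by
  intro m a ha e he hpe
  set g0 : ℕ → A := liftFun E κ p a e with hg0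
  have hmain : ∀ k : ℕ, (k:ℤ) ≤ (m:ℤ) → g0 k ∈ E ∧ p (g0 k) = a (k:ℤ) := by
    intro k
    induction k with
    | zero => intro _; exact ⟨he, by show p e = a ((0:ℕ):ℤ); simpa using hpe⟩
    | succ k ih =>
      intro hk1
      push_cast at hk1
      obtain ⟨hgE, hgp⟩ := ih (by omega)
      have iso := sheet_iso hcov _ hgE
      have hmem : a ((k:ℤ)+1) ∈ Nbhd Bs lam (p (g0 k)) 1 := by
        rw [hgp, mem_nbhd_one hlam.1 (ha.1 _ ⟨by positivity, by omega⟩)]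
        exact ⟨ha.1 _ ⟨by omega, by omega⟩,
          (isDigPath_step ha (by positivity) (by omega)).imp Eq.symm id⟩
      obtain ⟨y, hy, hpy⟩ := iso.2.2.1 hmem
      have hex : ∃ y, y ∈ Nbhd E κ (g0 k) 1 ∧ p y = a ((k:ℤ)+1) := ⟨y, hy, hpy⟩
      have heq : g0 (k+1) = hex.choose := by
        show liftFun E κ p a e (k+1) = hex.choose
        rw [liftFun]
        exact dif_pos hex
      obtain ⟨hc1, hc2⟩ := hex.choose_spec
      rw [heq]
      push_cast
      exact ⟨nbhd_subset hgE hc1, hc2⟩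
  have hstep : ∀ k : ℕ, ((k:ℤ)+1) ≤ (m:ℤ) → g0 (k+1) ∈ Nbhd E κ (g0 k) 1 := by
    intro k hk1
    obtain ⟨hgE, hgp⟩ := hmain k (by omega)
    have iso := sheet_iso hcov _ hgE
    have hmem : a ((k:ℤ)+1) ∈ Nbhd Bs lam (p (g0 k)) 1 := by
      rw [hgp, mem_nbhd_one hlam.1 (ha.1 _ ⟨by positivity, by omega⟩)]
      exact ⟨ha.1 _ ⟨by omega, by omega⟩,
        (isDigPath_step ha (by positivity) (by omega)).imp Eq.symm id⟩
    obtain ⟨y, hy, hpy⟩ := iso.2.2.1 hmem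
    have hex : ∃ y, y ∈ Nbhd E κ (g0 k) 1 ∧ p y = a ((k:ℤ)+1) := ⟨y, hy, hpy⟩
    have heq : g0 (k+1) = hex.choose := by
      show liftFun E κ p a e (k+1) = hex.choose
      rw [liftFun]
      exact dif_pos hex
    rw [heq]
    exact hex.choose_spec.1
  refine ⟨fun i => g0 i.toNat, ⟨?_, ?_⟩, ?_, ?_⟩
  · intro i hi
    simp only [mem_Icc] at hi
    exact (hmain i.toNat (by omega)).1
  · intro i hi j hj hadj
    rw [adj2_iff] at hadj
    simp only [mem_Icc] at hi hj
    rcases hadj with rfl | rfl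
    · -- j = i + 1
      have hit : (i+1).toNat = i.toNat + 1 := by omega
      show g0 i.toNat = g0 ((i+1).toNat) ∨ κ (g0 i.toNat) (g0 ((i+1).toNat))
      rw [hit]
      have := hstep i.toNat (by omega)
      rw [mem_nbhd_one hκ.1 (hmain i.toNat (by omega)).1] at this
      exact this.2.imp Eq.symm id
    · have hit : (j+1).toNat = j.toNat + 1 := by omega
      show g0 ((j+1).toNat) = g0 j.toNat ∨ κ (g0 ((j+1).toNat)) (g0 j.toNat)
      rw [hit]
      have := hstep j.toNat (by omega)
      rw [mem_nbhd_one hκ.1 (hmain j.toNat (by omega)).1] at this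
      rcases this.2 with h | h
      · exact Or.inl h
      · exact Or.inr (hκ.1 h)
  · intro i hi
    simp only [mem_Icc] at hi
    have := (hmain i.toNat (by omega)).2
    show p (g0 i.toNat) = a i
    rw [this, Int.toNat_of_nonneg hi.1]
  · show g0 0 = e
    rfl

end AuxCovering

section AuxStar

variable {A B : Type*} {E : Set A} {Bs : Set B} {κ : A → A → Prop} {lam : B → B → Prop}
  {p : A → B}

/-- Key lemma: if every lifting of every simple loop of length at most `2n+1` is a simple
loop, then every lifting of *any* loop of length at most `2n+1` is closed. -/
lemma star_closed (hκ : IsAdjacency κ) (hlam : IsAdjacency lam)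
    (hcov : IsRadiusCovering p E Bs κ lam 1) (n : ℕ)
    (H : ∀ m : ℕ, m ≤ 2 * n + 1 → ∀ a : ℤ → B, IsSimpleLoop Bs lam m a →
        ∀ g : ℤ → A, IsDigPath E κ m g →
          (∀ i ∈ Icc (0 : ℤ) (m : ℤ), p (g i) = a i) → IsSimpleLoop E κ m g) :
    ∀ L : ℕ, L ≤ 2 * n + 1 → ∀ a : ℤ → B, IsDigPath Bs lam L a → a 0 = a (L:ℤ) →
      ∀ g : ℤ → A, IsDigPath E κ L g → (∀ i ∈ Icc (0 : ℤ) (L : ℤ), p (g i) = a i) →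
      g 0 = g (L:ℤ) := by
  intro L
  induction L using Nat.strong_induction_on with
  | _ L ih =>
  intro hL a ha haloop g hg hlift
  by_contra hne
  rcases Nat.eq_zero_or_pos L with rfl | hL0
  · exact hne (by norm_num)
  rcases eq_or_lt_of_le (show 1 ≤ L from hL0) with hL1 | hL2
  · -- L = 1 : any lift of a length-1 loop is closed by injectivity on the sheet
    subst hL1
    have hgE : g 0 ∈ E := hg.1 0 ⟨le_rfl, by positivity⟩
    have iso := sheet_iso hcov _ hgE
    have hstep := isDigPath_step hg (le_refl (0:ℤ)) (by norm_num)
    rw [zero_add] at hstep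
    have h1 : g 1 ∈ Nbhd E κ (g 0) 1 := by
      rw [mem_nbhd_one hκ.1 hgE]
      exact ⟨hg.1 1 ⟨by norm_num, by norm_num⟩, hstep.imp Eq.symm id⟩
    have hp01 : p (g 1) = p (g 0) := by
      rw [hlift 1 ⟨by norm_num, by norm_num⟩, hlift 0 ⟨le_rfl, by positivity⟩]
      have := haloop
      push_cast at this
      rw [← this]
    have hg10 : g 1 = g 0 := iso.2.1 h1 (self_mem_nbhd E κ (g 0) 1) hp01
    exact hne (by push_cast; exact hg10.symm)
  -- now 2 ≤ L
  have hL2' : (2:ℤ) ≤ (L:ℤ) := by exact_mod_cast hL2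
  -- Step 1: injectivity of `a` on `[0, L)`.
  have hinj : ∀ i j : ℤ, 0 ≤ i → i < j → j < (L:ℤ) → a i ≠ a j := by
    intro i j h0i hij hjL hEq
    apply hne
    set d : ℕ := (j - i).toNat with hd
    have hdz : (d:ℤ) = j - i := by omega
    -- inner loop: a on [i, j] is a loop, so its lift g on [i,j] is closed
    have hinner : g i = g j := by
      have hpath := isDigPath_shiftf ha i d h0i (by omega)
      have hgpath := isDigPath_shiftf hg i d h0i (by omega)
      have hres := ih d (by omega) (by omega) (shiftf a i) hpath
        (by simp only [shiftf_apply]; rw [zero_add, show (d:ℤ) + i = j by omega]; exact hEq)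
        (shiftf g i) hgpath
        (by
          intro t ht
          simp only [mem_Icc] at ht
          simp only [shiftf_apply]
          exact hlift (t + i) ⟨by omega, by omega⟩)
      simp only [shiftf_apply] at hres
      rw [zero_add, show (d:ℤ) + i = j by omega] at hres
      exact hres
    -- outer loop: remove the piece (i,j] from the loop
    set i' : ℕ := i.toNat with hi'd
    set r' : ℕ := ((L:ℤ) - j).toNat with hr'd
    have hi' : (i':ℤ) = i := by omega
    have hr' : (r':ℤ) = (L:ℤ) - j := by omega
    have hseamA : a (i':ℤ) = shiftf a j 0 := by
      rw [shiftf_apply, zero_add, hi']; exact hEq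
    have hseamG : g (i':ℤ) = shiftf g j 0 := by
      rw [shiftf_apply, zero_add, hi']; exact hinner
    have ha2 : IsDigPath Bs lam (i' + r') (pconcat (i':ℤ) a (shiftf a j)) :=
      isDigPath_pconcat (isDigPath_prefix ha (by omega))
        (isDigPath_shiftf ha j r' (by omega) (by omega)) hseamA
    have hg2 : IsDigPath E κ (i' + r') (pconcat (i':ℤ) g (shiftf g j)) :=
      isDigPath_pconcat (isDigPath_prefix hg (by omega))
        (isDigPath_shiftf hg j r' (by omega) (by omega)) hseamG
    have hres := ih (i' + r') (by omega) (by omega) _ ha2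
      (by
        rw [pconcat_left (by positivity : (0:ℤ) ≤ (i':ℤ)),
          pconcat_right hseamA (by push_cast; omega)]
        simp only [shiftf_apply]
        push_cast
        rw [show (i':ℤ) + (r':ℤ) - (i':ℤ) + j = (L:ℤ) by omega]
        exact haloop)
      _ hg2
      (by
        intro t ht
        simp only [mem_Icc] at ht
        push_cast at ht
        by_cases htl : t ≤ (i':ℤ)
        · rw [pconcat_left htl, pconcat_left htl]
          exact hlift t ⟨ht.1, by omega⟩
        · rw [pconcat_right hseamG (by omega), pconcat_right hseamA (by omega)]
          simp only [shiftf_apply]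
          exact hlift (t - (i':ℤ) + j) ⟨by omega, by omega⟩)
    rw [pconcat_left (by positivity : (0:ℤ) ≤ (i':ℤ)),
      pconcat_right hseamG (by push_cast; omega)] at hres
    simp only [shiftf_apply] at hres
    push_cast at hres
    rw [show (i':ℤ) + (r':ℤ) - (i':ℤ) + j = (L:ℤ) by omega] at hres
    exact hres
  -- Step 2: there are no chords
  have hchord : ∀ i j : ℤ, 0 ≤ i → i + 2 ≤ j → j < (L:ℤ) → ¬(i = 0 ∧ j = (L:ℤ) - 1) →
      ¬ lam (a i) (a j) := by
    intro i j h0i hij hjL hnc hadj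
    apply hne
    have hgiE : g i ∈ E := hg.1 i ⟨by omega, by omega⟩
    have hgjE : g j ∈ E := hg.1 j ⟨by omega, by omega⟩
    have hai : a i ∈ Bs := ha.1 i ⟨by omega, by omega⟩
    have haj : a j ∈ Bs := ha.1 j ⟨by omega, by omega⟩
    -- lift the chord backwards at `g j`
    have isoj := sheet_iso hcov _ hgjE
    have hmemB : a i ∈ Nbhd Bs lam (p (g j)) 1 := by
      rw [hlift j ⟨by omega, by omega⟩, mem_nbhd_one hlam.1 haj]
      exact ⟨hai, Or.inr (hlam.1 hadj)⟩
    obtain ⟨x'', hx''mem, hx''p⟩ := isoj.2.2.1 hmemB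
    have hx''nb := (mem_nbhd_one hκ.1 hgjE).mp hx''mem
    set d : ℕ := (j - i).toNat with hd
    have hdz : (d:ℤ) = j - i := by omega
    -- small loop around [i,j] plus the chord: its lift must be closed
    have key : g i = x'' := by
      have hseamA : shiftf a i (d:ℤ) = mkStep (a j) (a i) 0 := by
        rw [shiftf_apply, show (d:ℤ) + i = j by omega, mkStep_zero]
      have hseamG : shiftf g i (d:ℤ) = mkStep (g j) x'' 0 := by
        rw [shiftf_apply, show (d:ℤ) + i = j by omega, mkStep_zero]
      have hpath2 : IsDigPath Bs lam (d + 1)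
          (pconcat (d:ℤ) (shiftf a i) (mkStep (a j) (a i))) :=
        isDigPath_pconcat (isDigPath_shiftf ha i d h0i (by omega))
          (isDigPath_mkStep hlam.1 haj hai (Or.inr (hlam.1 hadj))) hseamA
      have hgpath2 : IsDigPath E κ (d + 1)
          (pconcat (d:ℤ) (shiftf g i) (mkStep (g j) x'')) :=
        isDigPath_pconcat (isDigPath_shiftf hg i d h0i (by omega))
          (isDigPath_mkStep hκ.1 hgjE hx''nb.1 (hx''nb.2.imp Eq.symm id)) hseamG
      have hres := ih (d + 1) (by omega) (by omega) _ hpath2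
        (by
          rw [pconcat_left (by positivity : (0:ℤ) ≤ (d:ℤ)),
            pconcat_right hseamA (by push_cast; omega)]
          simp only [shiftf_apply]
          push_cast
          rw [zero_add, show (d:ℤ) + 1 - (d:ℤ) = 1 by ring, mkStep_one])
        _ hgpath2
        (by
          intro t ht
          simp only [mem_Icc] at ht
          push_cast at ht
          by_cases htl : t ≤ (d:ℤ)
          · rw [pconcat_left htl, pconcat_left htl]
            simp only [shiftf_apply]
            exact hlift (t + i) ⟨by omega, by omega⟩
          · rw [pconcat_right hseamG (by omega), pconcat_right hseamA (by omega)]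
            have ht1 : t - (d:ℤ) = 1 := by omega
            rw [ht1, mkStep_one, mkStep_one]
            exact hx''p)
      rw [pconcat_left (by positivity : (0:ℤ) ≤ (d:ℤ)),
        pconcat_right hseamG (by push_cast; omega)] at hres
      simp only [shiftf_apply] at hres
      push_cast at hres
      rw [zero_add, show (d:ℤ) + 1 - (d:ℤ) = 1 by ring, mkStep_one] at hres
      exact hres
    have hgij : g i ≠ g j := by
      intro hEq
      exact hinj i j h0i (by omega) hjL
        (by rw [← hlift i ⟨by omega, by omega⟩, ← hlift j ⟨by omega, by omega⟩, hEq])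
    have hkij : κ (g i) (g j) := by
      rcases hx''nb.2 with hE | hk
      · exact absurd (key.trans hE) hgij
      · rw [key]; exact hκ.1 hk
    -- now shorten the loop using the chord
    set i' : ℕ := i.toNat with hi'd
    set r' : ℕ := ((L:ℤ) - j).toNat with hr'd
    have hi' : (i':ℤ) = i := by omega
    have hr' : (r':ℤ) = (L:ℤ) - j := by omega
    have hseamIA : mkStep (a i) (a j) 1 = shiftf a j 0 := by
      rw [shiftf_apply, mkStep_one, zero_add]
    have hseamIG : mkStep (g i) (g j) 1 = shiftf g j 0 := by
      rw [shiftf_apply, mkStep_one, zero_add]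
    have hinnerA : IsDigPath Bs lam (1 + r')
        (pconcat (1:ℤ) (mkStep (a i) (a j)) (shiftf a j)) := by
      have := isDigPath_pconcat (isDigPath_mkStep hlam.1 hai haj (Or.inr hadj))
        (isDigPath_shiftf ha j r' (by omega) (by omega)) hseamIA
      exact_mod_cast this
    have hinnerG : IsDigPath E κ (1 + r')
        (pconcat (1:ℤ) (mkStep (g i) (g j)) (shiftf g j)) := by
      have := isDigPath_pconcat (isDigPath_mkStep hκ.1 hgiE hgjE (Or.inr hkij))
        (isDigPath_shiftf hg j r' (by omega) (by omega)) hseamIG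
      exact_mod_cast this
    have hseamOA : a (i':ℤ) = pconcat (1:ℤ) (mkStep (a i) (a j)) (shiftf a j) 0 := by
      rw [pconcat_left (by norm_num : (0:ℤ) ≤ 1), mkStep_zero, hi']
    have hseamOG : g (i':ℤ) = pconcat (1:ℤ) (mkStep (g i) (g j)) (shiftf g j) 0 := by
      rw [pconcat_left (by norm_num : (0:ℤ) ≤ 1), mkStep_zero, hi']
    have houterA : IsDigPath Bs lam (i' + (1 + r'))
        (pconcat (i':ℤ) a (pconcat (1:ℤ) (mkStep (a i) (a j)) (shiftf a j))) :=
      isDigPath_pconcat (isDigPath_prefix ha (by omega)) hinnerA hseamOA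
    have houterG : IsDigPath E κ (i' + (1 + r'))
        (pconcat (i':ℤ) g (pconcat (1:ℤ) (mkStep (g i) (g j)) (shiftf g j))) :=
      isDigPath_pconcat (isDigPath_prefix hg (by omega)) hinnerG hseamOG
    have hres := ih (i' + (1 + r')) (by omega) (by omega) _ houterA
      (by
        rw [pconcat_left (by positivity : (0:ℤ) ≤ (i':ℤ)),
          pconcat_right hseamOA (by push_cast; omega)]
        push_cast
        rw [pconcat_right hseamIA (by omega)]
        simp only [shiftf_apply]
        rw [show (i':ℤ) + (1 + (r':ℤ)) - (i':ℤ) - 1 + j = (L:ℤ) by omega]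
        exact haloop)
      _ houterG
      (by
        intro t ht
        simp only [mem_Icc] at ht
        push_cast at ht
        by_cases htl : t ≤ (i':ℤ)
        · rw [pconcat_left htl, pconcat_left htl]
          exact hlift t ⟨ht.1, by omega⟩
        · rw [pconcat_right hseamOG (by omega), pconcat_right hseamOA (by omega)]
          by_cases htm : t - (i':ℤ) ≤ 1
          · rw [pconcat_left htm, pconcat_left htm]
            have ht1 : t - (i':ℤ) = 1 := by omega
            rw [ht1, mkStep_one, mkStep_one]
            exact hlift j ⟨by omega, by omega⟩
          · rw [pconcat_right hseamIG (by omega), pconcat_right hseamIA (by omega)]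
            simp only [shiftf_apply]
            exact hlift (t - (i':ℤ) - 1 + j) ⟨by omega, by omega⟩)
    rw [pconcat_left (by positivity : (0:ℤ) ≤ (i':ℤ)),
      pconcat_right hseamOG (by push_cast; omega)] at hres
    push_cast at hres
    rw [pconcat_right hseamIG (by omega)] at hres
    simp only [shiftf_apply] at hres
    rw [show (i':ℤ) + (1 + (r':ℤ)) - (i':ℤ) - 1 + j = (L:ℤ) by omega] at hres
    exact hres
  -- Step 3: consecutive points are adjacent
  have hcons : ∀ i : ℤ, 0 ≤ i → i < (L:ℤ) → lam (a i) (a (i + 1)) := by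
    intro i h0 hiL
    rcases isDigPath_step ha h0 (by omega) with hE | hk
    · exfalso
      rcases eq_or_lt_of_le (by omega : i + 1 ≤ (L:ℤ)) with hE2 | hlt
      · exact hinj 0 i le_rfl (by omega) hiL (by rw [haloop, ← hE2]; exact hE.symm)
      · exact hinj i (i + 1) h0 (by omega) hlt hE
    · exact hk
  -- Step 4: `a` is a simple loop
  have hinj' : ∀ i ∈ Ico (0:ℤ) (L:ℤ), ∀ j ∈ Ico (0:ℤ) (L:ℤ), a i = a j → i = j := by
    intro i hi j hj hEq
    simp only [mem_Ico] at hi hj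
    rcases lt_trichotomy i j with h | h | h
    · exact absurd hEq (hinj i j hi.1 h hj.2)
    · exact h
    · exact absurd hEq.symm (hinj j i hj.1 h hi.2)
  have hsimple : IsSimpleLoop Bs lam L a := by
    refine ⟨ha, haloop, hinj', ?_⟩
    intro i hi j hj
    simp only [mem_Ico] at hi hj
    constructor
    · intro hadj
      have hij : i ≠ j := fun h => hlam.2 _ (h ▸ hadj)
      rcases lt_or_gt_of_ne hij with h | h
      · rcases eq_or_lt_of_le (by omega : i + 1 ≤ j) with hE | hlt
        · exact Or.inl ((emod_succ_cases hi.1 hi.2 hj.1 hj.2).mpr (Or.inl hE.symm))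
        · have hc : i = 0 ∧ j = (L:ℤ) - 1 := by
            by_contra hnc'
            exact hchord i j hi.1 (by omega) hj.2 hnc' hadj
          exact Or.inr ((emod_pred_cases hi.1 hi.2 hj.1 hj.2).mpr (Or.inr ⟨hc.1, hc.2⟩))
      · rcases eq_or_lt_of_le (by omega : j + 1 ≤ i) with hE | hlt
        · exact Or.inr ((emod_pred_cases hi.1 hi.2 hj.1 hj.2).mpr (Or.inl (by omega)))
        · have hc : j = 0 ∧ i = (L:ℤ) - 1 := by
            by_contra hnc'
            exact hchord j i hj.1 (by omega) hi.2 hnc' (hlam.1 hadj)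
          exact Or.inl ((emod_succ_cases hi.1 hi.2 hj.1 hj.2).mpr (Or.inr ⟨hc.2, hc.1⟩))
    · intro hmod
      rcases hmod with h | h
      · rcases (emod_succ_cases hi.1 hi.2 hj.1 hj.2).mp h with hE | ⟨hE1, hE2⟩
        · rw [hE]; exact hcons i hi.1 (by omega)
        · have h5 := hcons ((L:ℤ) - 1) (by omega) (by omega)
          rw [show (L:ℤ) - 1 + 1 = (L:ℤ) by ring, ← haloop] at h5
          rw [hE1, hE2]
          exact h5
      · rcases (emod_pred_cases hi.1 hi.2 hj.1 hj.2).mp h with hE | ⟨hE1, hE2⟩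
        · have h5 := hcons j hj.1 (by omega)
          rw [show j + 1 = i by omega] at h5
          exact hlam.1 h5
        · have h5 := hcons ((L:ℤ) - 1) (by omega) (by omega)
          rw [show (L:ℤ) - 1 + 1 = (L:ℤ) by ring, ← haloop] at h5
          rw [hE1, hE2]
          exact hlam.1 h5
  exact hne ((H L hL a hsimple g hg hlift).2.1)

end AuxStar

section AuxRev

variable {A B : Type*} {X : Set A} {κ : A → A → Prop}

/-- named reversal, to keep unification first-order -/
def revf {A : Type*} (f : ℤ → A) (m : ℤ) : ℤ → A := fun t => f (m - t)

lemma revf_apply {A : Type*} (f : ℤ → A) (m t : ℤ) : revf f m t = f (m - t) := rfl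

lemma isDigPath_revf {m : ℕ} {f : ℤ → A} (h : IsDigPath X κ m f) :
    IsDigPath X κ m (revf f (m:ℤ)) := isDigPath_reverse h

/-- named composition, to keep unification first-order -/
def cmpf {A B : Type*} (p : A → B) (f : ℤ → A) : ℤ → B := fun i => p (f i)

lemma cmpf_apply {A B : Type*} (p : A → B) (f : ℤ → A) (i : ℤ) : cmpf p f i = p (f i) := rfl

lemma isDigPath_cmpf {B : Type*} {E : Set A} {Bs : Set B} {lam : B → B → Prop} {p : A → B}
    (hmap : MapsTo p E Bs) (hcont : DigContOn p E κ lam) {m : ℕ} {f : ℤ → A}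
    (h : IsDigPath E κ m f) : IsDigPath Bs lam m (cmpf p f) :=
  isDigPath_map hmap hcont h

end AuxRev

/-- Theorem 4.5: a `(κ,λ)`-covering map `p` between connected digital images is a radius `n`
covering map if and only if every lifting of every simple `λ`-loop in `Bs` of length at most
`2n+1` is a simple `κ`-loop in `E`. -/
theorem thm_4_5 {N M : ℕ} (E : Set (Fin N → ℤ)) (Bs : Set (Fin M → ℤ))
    (κ : (Fin N → ℤ) → (Fin N → ℤ) → Prop) (lam : (Fin M → ℤ) → (Fin M → ℤ) → Prop)
    (hκ : IsAdjacency κ) (hlam : IsAdjacency lam)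
    (hconnE : DigConnected E κ) (hconnB : DigConnected Bs lam)
    (p : (Fin N → ℤ) → (Fin M → ℤ))
    (hcov : IsRadiusCovering p E Bs κ lam 1)
    (n : ℕ) (hn : 1 ≤ n) :
    IsRadiusCovering p E Bs κ lam n ↔
      ∀ m : ℕ, m ≤ 2 * n + 1 → ∀ a : ℤ → (Fin M → ℤ), IsSimpleLoop Bs lam m a →
        ∀ g : ℤ → (Fin N → ℤ), IsDigPath E κ m g →
          (∀ i ∈ Set.Icc (0 : ℤ) (m : ℤ), p (g i) = a i) →
          IsSimpleLoop E κ m g := by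
  have hmap : MapsTo p E Bs := hcov.1
  have hcont : DigContOn p E κ lam := hcov.2.2.1
  constructor
  · -- forward direction
    intro hrn m hm a hasimp g hg hlift
    classical
    obtain ⟨haP, haLoop, haInj, haIff⟩ := hasimp
    have hm1 : m ≠ 1 := by
      intro hE
      subst hE
      have h00 : (0:ℤ) ∈ Ico (0:ℤ) ((1:ℕ):ℤ) := by constructor <;> norm_num
      have := (haIff 0 h00 0 h00).mpr (Or.inl (by norm_num))
      exact hlam.2 _ this
    have hb : a 0 ∈ Bs := haP.1 0 ⟨le_rfl, by positivity⟩
    obtain ⟨F, hF, hcover, hdisj, hiso⟩ := hrn.2.2.2 (a 0) hb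
    have hg0E : g 0 ∈ E := hg.1 0 ⟨le_rfl, by positivity⟩
    have hg0mem : g 0 ∈ E ∩ p ⁻¹' (Nbhd Bs lam (a 0) n) := by
      refine ⟨hg0E, ?_⟩
      rw [mem_preimage, hlift 0 ⟨le_rfl, by positivity⟩]
      exact self_mem_nbhd Bs lam (a 0) n
    rw [hcover] at hg0mem
    simp only [mem_iUnion, exists_prop] at hg0mem
    obtain ⟨e, heF, hg0e⟩ := hg0mem
    have iso0 := hiso e heF
    have heq : g 0 = e := iso0.2.1 hg0e (self_mem_nbhd E κ e n)
      (by rw [hlift 0 ⟨le_rfl, by positivity⟩, (hF heF).2])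
    subst heq
    set S := Nbhd E κ (g 0) n with hSdef
    have iso : IsDigIsoOn p S (Nbhd Bs lam (a 0) n) κ lam := iso0
    have hSsub : S ⊆ E := nbhd_subset hg0E
    have haiN : ∀ i : ℤ, 0 ≤ i → i ≤ (m:ℤ) → a i ∈ Nbhd Bs lam (a 0) n := by
      intro i h0 him
      rw [mem_nbhd_iff hb]
      rcases le_or_gt i (n:ℤ) with hle | hgt
      · exact ⟨i.toNat, by omega,
          ⟨a, isDigPath_prefix haP (by omega), rfl, by rw [Int.toNat_of_nonneg h0]⟩⟩
      · refine ⟨((m:ℤ) - i).toNat, by omega, ?_⟩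
        refine ⟨revf a (m:ℤ), isDigPath_prefix (isDigPath_revf haP) (by omega), ?_, ?_⟩
        · rw [revf_apply, sub_zero]
          exact haLoop.symm
        · rw [revf_apply, show (m:ℤ) - (((((m:ℤ) - i).toNat) : ℕ) : ℤ) = i by omega]
    have hchoice : ∀ i : ℤ, 0 ≤ i → i ≤ (m:ℤ) → ∃ x, x ∈ S ∧ p x = a i := by
      intro i h0 him
      obtain ⟨x, hxS, hxp⟩ := iso.2.2.1 (haiN i h0 him)
      exact ⟨x, hxS, hxp⟩
    set h : ℤ → (Fin N → ℤ) :=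
      fun i => if hc : ∃ x, x ∈ S ∧ p x = a i then hc.choose else g 0 with hhdef
    have hhspec : ∀ i : ℤ, 0 ≤ i → i ≤ (m:ℤ) → h i ∈ S ∧ p (h i) = a i := by
      intro i h0 him
      have hc := hchoice i h0 him
      simp only [hhdef]
      rw [dif_pos hc]
      exact hc.choose_spec
    have hhpath : IsDigPath E κ m h := by
      constructor
      · intro i hi
        simp only [mem_Icc] at hi
        exact hSsub (hhspec i hi.1 hi.2).1
      · intro i hi j hj hadj
        simp only [mem_Icc] at hi hj
        obtain ⟨hiS, hip⟩ := hhspec i hi.1 hi.2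
        obtain ⟨hjS, hjp⟩ := hhspec j hj.1 hj.2
        rcases haP.2 i ⟨hi.1, hi.2⟩ j ⟨hj.1, hj.2⟩ hadj with hE | hk
        · exact Or.inl (iso.2.1 hiS hjS (by rw [hip, hjp, hE]))
        · exact iso.2.2.2.2 _ hiS _ hjS (by rw [hip, hjp]; exact hk)
    have hh0 : g 0 = h 0 :=
      iso.2.1 (self_mem_nbhd E κ (g 0) n) (hhspec 0 le_rfl (by positivity)).1
        (by rw [(hhspec 0 le_rfl (by positivity)).2, hlift 0 ⟨le_rfl, by positivity⟩])
    have hEqgh := uniq_lifts hκ hcov m g h hg hhpath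
      (by
        intro i hi
        simp only [mem_Icc] at hi
        rw [hlift i ⟨hi.1, hi.2⟩, (hhspec i hi.1 hi.2).2])
      hh0
    have hgS : ∀ i : ℤ, 0 ≤ i → i ≤ (m:ℤ) → g i ∈ S := by
      intro i h0 him
      rw [hEqgh ⟨h0, him⟩]
      exact (hhspec i h0 him).1
    refine ⟨hg, ?_, ?_, ?_⟩
    · exact iso.2.1 (hgS 0 le_rfl (by positivity)) (hgS (m:ℤ) (by positivity) le_rfl)
        (by rw [hlift 0 ⟨le_rfl, by positivity⟩, hlift (m:ℤ) ⟨by positivity, le_rfl⟩, haLoop])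
    · intro i hi j hj hE
      have hi' := hi
      have hj' := hj
      simp only [mem_Ico] at hi' hj'
      exact haInj i hi j hj
        (by rw [← hlift i ⟨hi'.1, by omega⟩, ← hlift j ⟨hj'.1, by omega⟩, hE])
    · intro i hi j hj
      have hi' := hi
      have hj' := hj
      simp only [mem_Ico] at hi' hj'
      constructor
      · intro hk
        have hane : a i ≠ a j := by
          intro hE
          have hij : i = j := haInj i hi j hj hE
          exact hκ.2 _ (hij ▸ hk)
        rcases hcont _ (hg.1 i ⟨hi'.1, by omega⟩) _ (hg.1 j ⟨hj'.1, by omega⟩) hk with hE | hl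
        · exact absurd
            (by rw [← hlift i ⟨hi'.1, by omega⟩, ← hlift j ⟨hj'.1, by omega⟩]; exact hE) hane
        · exact (haIff i hi j hj).mp
            (by rw [← hlift i ⟨hi'.1, by omega⟩, ← hlift j ⟨hj'.1, by omega⟩]; exact hl)
      · intro hmod
        have hlam' : lam (a i) (a j) := (haIff i hi j hj).mpr hmod
        rcases iso.2.2.2.2 _ (hgS i hi'.1 (by omega)) _ (hgS j hj'.1 (by omega))
          (by rw [hlift i ⟨hi'.1, by omega⟩, hlift j ⟨hj'.1, by omega⟩]; exact hlam')
          with hE | hk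
        · exfalso
          have hij : i = j := haInj i hi j hj
            (by rw [← hlift i ⟨hi'.1, by omega⟩, ← hlift j ⟨hj'.1, by omega⟩, hE])
          subst hij
          have hm2 : 2 ≤ m := by omega
          rcases hmod with hmm | hmm
          · rcases (emod_succ_cases hi'.1 hi'.2 hi'.1 hi'.2).mp hmm with hE2 | ⟨hE2, hE3⟩ <;>
              omega
          · rcases (emod_pred_cases hi'.1 hi'.2 hi'.1 hi'.2).mp hmm with hE2 | ⟨hE2, hE3⟩ <;>
              omega
        · exact hk
  · -- backward direction
    intro H
    have star := star_closed hκ hlam hcov n H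
    refine ⟨hmap, hcov.2.1, hcont, ?_⟩
    intro b hb
    refine ⟨{e | e ∈ E ∧ p e = b}, fun e he => he, ?_, ?_, ?_⟩
    · -- the sheets cover the preimage of the neighborhood
      ext x
      simp only [mem_inter_iff, mem_preimage, mem_iUnion, mem_setOf_eq, exists_prop]
      constructor
      · rintro ⟨hxE, hxN⟩
        rw [mem_nbhd_iff hb] at hxN
        obtain ⟨m, hmn, hr⟩ := hxN
        obtain ⟨α, hα, hα0, hαm⟩ := reachIn_symm hr
        obtain ⟨G, hG, hGl, hG0⟩ := path_lift hκ hlam hcov m α hα x hxE (by rw [hα0])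
        have hGmE : G (m:ℤ) ∈ E := hG.1 _ ⟨by positivity, le_rfl⟩
        refine ⟨G (m:ℤ), ⟨hGmE, by rw [hGl _ ⟨by positivity, le_rfl⟩, hαm]⟩, ?_⟩
        rw [mem_nbhd_iff hGmE]
        exact ⟨m, hmn, reachIn_symm ⟨G, hG, hG0, rfl⟩⟩
      · rintro ⟨e, ⟨heE, hpe⟩, hxN⟩
        rw [mem_nbhd_iff heE] at hxN
        obtain ⟨m, hmn, hr⟩ := hxN
        refine ⟨reachIn_tgt hr, ?_⟩
        rw [mem_nbhd_iff hb]
        exact ⟨m, hmn, by rw [← hpe]; exact reachIn_map hmap hcont hr⟩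
    · -- the sheets are pairwise disjoint
      intro e he e' he' hnee
      rw [Set.disjoint_left]
      intro x hx hx'
      apply hnee
      obtain ⟨heE, hpe⟩ := he
      obtain ⟨he'E, hpe'⟩ := he'
      obtain ⟨s, hs, hrs⟩ := (mem_nbhd_iff heE).mp hx
      obtain ⟨t, ht, hrt⟩ := (mem_nbhd_iff he'E).mp hx'
      obtain ⟨γ, hγ, hγ0, hγs⟩ := hrs
      obtain ⟨δ, hδ, hδ0, hδt⟩ := hrt
      have hseamG : γ (s:ℤ) = revf δ (t:ℤ) 0 := by
        rw [revf_apply, sub_zero, hγs, hδt]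
      have hseamB : cmpf p γ (s:ℤ) = revf (cmpf p δ) (t:ℤ) 0 := by
        rw [cmpf_apply, revf_apply, sub_zero, cmpf_apply, hγs, hδt]
      have hGpath : IsDigPath E κ (s + t) (pconcat (s:ℤ) γ (revf δ (t:ℤ))) :=
        isDigPath_pconcat hγ (isDigPath_revf hδ) hseamG
      have hBpath : IsDigPath Bs lam (s + t)
          (pconcat (s:ℤ) (cmpf p γ) (revf (cmpf p δ) (t:ℤ))) :=
        isDigPath_pconcat (isDigPath_cmpf hmap hcont hγ)
          (isDigPath_revf (isDigPath_cmpf hmap hcont hδ)) hseamB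
      have hclosed := star (s + t) (by omega) _ hBpath
        (by
          rw [pconcat_left (by positivity : (0:ℤ) ≤ (s:ℤ)),
            pconcat_right hseamB (by push_cast; omega), revf_apply, cmpf_apply, cmpf_apply,
            hγ0, show (t:ℤ) - ((((s + t : ℕ):ℤ)) - (s:ℤ)) = 0 by push_cast; ring, hδ0,
            hpe, hpe'])
        _ hGpath
        (by
          intro i hi
          simp only [mem_Icc] at hi
          by_cases hil : i ≤ (s:ℤ)
          · rw [pconcat_left hil, pconcat_left hil, cmpf_apply]
          · rw [pconcat_right hseamG (by omega), pconcat_right hseamB (by omega),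
              revf_apply, revf_apply, cmpf_apply])
      rw [pconcat_left (by positivity : (0:ℤ) ≤ (s:ℤ)),
        pconcat_right hseamG (by push_cast; omega), revf_apply,
        hγ0, show (t:ℤ) - ((((s + t : ℕ):ℤ)) - (s:ℤ)) = 0 by push_cast; ring, hδ0] at hclosed
      exact hclosed
    · -- each sheet maps isomorphically
      intro e he
      obtain ⟨heE, hpe⟩ := he
      have hNsub : Nbhd E κ e n ⊆ E := nbhd_subset heE
      refine ⟨?_, ?_, ?_, ?_, ?_⟩
      · -- MapsTo
        intro x hx
        obtain ⟨m, hmn, hr⟩ := (mem_nbhd_iff heE).mp hx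
        rw [mem_nbhd_iff hb]
        exact ⟨m, hmn, by rw [← hpe]; exact reachIn_map hmap hcont hr⟩
      · -- InjOn
        intro x hx y hy hpxy
        obtain ⟨s, hs, hrs⟩ := (mem_nbhd_iff heE).mp hx
        obtain ⟨t, ht, hrt⟩ := (mem_nbhd_iff heE).mp hy
        obtain ⟨γ, hγ, hγ0, hγs⟩ := hrs
        obtain ⟨δ, hδ, hδ0, hδt⟩ := hrt
        have hxE : x ∈ E := hNsub hx
        have hrevδ : IsDigPath Bs lam t (revf (cmpf p δ) (t:ℤ)) :=
          isDigPath_revf (isDigPath_cmpf hmap hcont hδ)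
        obtain ⟨ε, hε, hεl, hε0⟩ := path_lift hκ hlam hcov t (revf (cmpf p δ) (t:ℤ)) hrevδ
          x hxE (by rw [revf_apply, sub_zero, cmpf_apply, hδt]; exact hpxy)
        have hseamG : γ (s:ℤ) = ε 0 := by rw [hγs, hε0]
        have hseamB : cmpf p γ (s:ℤ) = revf (cmpf p δ) (t:ℤ) 0 := by
          rw [cmpf_apply, revf_apply, sub_zero, cmpf_apply, hγs, hδt]
          exact hpxy
        have hGpath : IsDigPath E κ (s + t) (pconcat (s:ℤ) γ ε) :=
          isDigPath_pconcat hγ hε hseamG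
        have hBpath : IsDigPath Bs lam (s + t)
            (pconcat (s:ℤ) (cmpf p γ) (revf (cmpf p δ) (t:ℤ))) :=
          isDigPath_pconcat (isDigPath_cmpf hmap hcont hγ) hrevδ hseamB
        have hclosed := star (s + t) (by omega) _ hBpath
          (by
            rw [pconcat_left (by positivity : (0:ℤ) ≤ (s:ℤ)),
              pconcat_right hseamB (by push_cast; omega), revf_apply, cmpf_apply, cmpf_apply,
              hγ0, show (t:ℤ) - ((((s + t : ℕ):ℤ)) - (s:ℤ)) = 0 by push_cast; ring, hδ0])
          _ hGpath
          (by
            intro i hi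
            simp only [mem_Icc] at hi
            by_cases hil : i ≤ (s:ℤ)
            · rw [pconcat_left hil, pconcat_left hil, cmpf_apply]
            · rw [pconcat_right hseamG (by omega), pconcat_right hseamB (by omega)]
              exact hεl _ ⟨by omega, by push_cast; omega⟩)
        rw [pconcat_left (by positivity : (0:ℤ) ≤ (s:ℤ)),
          pconcat_right hseamG (by push_cast; omega), hγ0,
          show (((s + t : ℕ):ℤ)) - (s:ℤ) = (t:ℤ) by push_cast; ring] at hclosed
        -- hclosed : e = ε t ; now apply uniqueness of lifts to δ and the reversal of ε
        have hun := uniq_lifts hκ hcov t δ (revf ε (t:ℤ)) hδ (isDigPath_revf hε)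
          (by
            intro r hr
            simp only [mem_Icc] at hr
            rw [revf_apply, hεl ((t:ℤ) - r) ⟨by omega, by omega⟩, revf_apply, cmpf_apply,
              show (t:ℤ) - ((t:ℤ) - r) = r by ring])
          (by rw [revf_apply, sub_zero, ← hclosed, hδ0])
        have := hun ⟨by positivity, le_rfl⟩
        rw [hδt, revf_apply, sub_self, hε0] at this
        exact this.symm
      · -- SurjOn
        intro c hc
        obtain ⟨m, hmn, hr⟩ := (mem_nbhd_iff hb).mp hc
        obtain ⟨α, hα, hα0, hαm⟩ := hr
        obtain ⟨G, hG, hGl, hG0⟩ := path_lift hκ hlam hcov m α hα e heE (by rw [hα0, hpe])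
        exact ⟨G (m:ℤ), (mem_nbhd_iff heE).mpr ⟨m, hmn, ⟨G, hG, hG0, rfl⟩⟩,
          by rw [hGl _ ⟨by positivity, le_rfl⟩, hαm]⟩
      · -- DigContOn
        intro x hx y hy hk
        exact hcont x (hNsub hx) y (hNsub hy) hk
      · -- adjacency reflection
        intro x hx y hy hadj
        by_contra hcon
        push_neg at hcon
        obtain ⟨hxy, hnk⟩ := hcon
        have hxE : x ∈ E := hNsub hx
        have hyE : y ∈ E := hNsub hy
        obtain ⟨s, hs, hrs⟩ := (mem_nbhd_iff heE).mp hx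
        obtain ⟨t, ht, hrt⟩ := (mem_nbhd_iff heE).mp hy
        obtain ⟨γ, hγ, hγ0, hγs⟩ := hrs
        obtain ⟨δ, hδ, hδ0, hδt⟩ := hrt
        -- lift the adjacency p x ~ p y at x
        have isox := sheet_iso hcov x hxE
        have hmemc : p y ∈ Nbhd Bs lam (p x) 1 := by
          rw [mem_nbhd_one hlam.1 (hmap hxE)]
          exact ⟨hmap hyE, Or.inr hadj⟩
        obtain ⟨x', hx'mem, hx'p⟩ := isox.2.2.1 hmemc
        have hx'nb := (mem_nbhd_one hκ.1 hxE).mp hx'mem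
        have hx'nex : x' ≠ x := by
          intro hE
          have hpxy' : p x = p y := hE ▸ hx'p
          exact hlam.2 _ (hpxy' ▸ hadj)
        have hκxx' : κ x x' := by
          rcases hx'nb.2 with hE | hk
          · exact absurd hE hx'nex
          · exact hk
        have hx'ney : x' ≠ y := fun hE => hnk (hE ▸ hκxx')
        have hrevδ : IsDigPath Bs lam t (revf (cmpf p δ) (t:ℤ)) :=
          isDigPath_revf (isDigPath_cmpf hmap hcont hδ)
        obtain ⟨ε, hε, hεl, hε0⟩ := path_lift hκ hlam hcov t (revf (cmpf p δ) (t:ℤ)) hrevδ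
          x' hx'nb.1 (by rw [revf_apply, sub_zero, cmpf_apply, hδt]; exact hx'p)
        -- inner pieces
        have hseamIG : mkStep x x' 1 = ε 0 := by rw [mkStep_one, hε0]
        have hseamIB : mkStep (p x) (p y) 1 = revf (cmpf p δ) (t:ℤ) 0 := by
          rw [mkStep_one, revf_apply, sub_zero, cmpf_apply, hδt]
        have hinnerG : IsDigPath E κ (1 + t) (pconcat (1:ℤ) (mkStep x x') ε) := by
          have := isDigPath_pconcat (isDigPath_mkStep hκ.1 hxE hx'nb.1 (Or.inr hκxx'))
            hε hseamIG
          exact_mod_cast this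
        have hinnerB : IsDigPath Bs lam (1 + t)
            (pconcat (1:ℤ) (mkStep (p x) (p y)) (revf (cmpf p δ) (t:ℤ))) := by
          have := isDigPath_pconcat
            (isDigPath_mkStep hlam.1 (hmap hxE) (hmap hyE) (Or.inr hadj)) hrevδ hseamIB
          exact_mod_cast this
        have hseamOG : γ (s:ℤ) = pconcat (1:ℤ) (mkStep x x') ε 0 := by
          rw [pconcat_left (by norm_num : (0:ℤ) ≤ 1), mkStep_zero, hγs]
        have hseamOB : cmpf p γ (s:ℤ) =
            pconcat (1:ℤ) (mkStep (p x) (p y)) (revf (cmpf p δ) (t:ℤ)) 0 := by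
          rw [pconcat_left (by norm_num : (0:ℤ) ≤ 1), mkStep_zero, cmpf_apply, hγs]
        have hGpath : IsDigPath E κ (s + (1 + t))
            (pconcat (s:ℤ) γ (pconcat (1:ℤ) (mkStep x x') ε)) :=
          isDigPath_pconcat hγ hinnerG hseamOG
        have hBpath : IsDigPath Bs lam (s + (1 + t))
            (pconcat (s:ℤ) (cmpf p γ)
              (pconcat (1:ℤ) (mkStep (p x) (p y)) (revf (cmpf p δ) (t:ℤ)))) :=
          isDigPath_pconcat (isDigPath_cmpf hmap hcont hγ) hinnerB hseamOB
        have hclosed := star (s + (1 + t)) (by omega) _ hBpath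
          (by
            rw [pconcat_left (by positivity : (0:ℤ) ≤ (s:ℤ)),
              pconcat_right hseamOB (by push_cast; omega),
              pconcat_right hseamIB (by push_cast; omega), revf_apply, cmpf_apply,
              cmpf_apply, hγ0,
              show (t:ℤ) - ((((s + (1 + t) : ℕ):ℤ)) - (s:ℤ) - 1) = 0 by push_cast; ring,
              hδ0])
          _ hGpath
          (by
            intro i hi
            simp only [mem_Icc] at hi
            by_cases hil : i ≤ (s:ℤ)
            · rw [pconcat_left hil, pconcat_left hil, cmpf_apply]
            · rw [pconcat_right hseamOG (by omega), pconcat_right hseamOB (by omega)]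
              by_cases him : i - (s:ℤ) ≤ 1
              · rw [pconcat_left him, pconcat_left him,
                  show i - (s:ℤ) = 1 by omega, mkStep_one, mkStep_one]
                exact hx'p
              · rw [pconcat_right hseamIG (by omega), pconcat_right hseamIB (by omega)]
                exact hεl _ ⟨by omega, by push_cast; omega⟩)
        rw [pconcat_left (by positivity : (0:ℤ) ≤ (s:ℤ)),
          pconcat_right hseamOG (by push_cast; omega),
          pconcat_right hseamIG (by push_cast; omega), hγ0,
          show (((s + (1 + t) : ℕ):ℤ)) - (s:ℤ) - 1 = (t:ℤ) by push_cast; ring] at hclosed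
        -- hclosed : e = ε t ; uniqueness of lifts
        have hun := uniq_lifts hκ hcov t δ (revf ε (t:ℤ)) hδ (isDigPath_revf hε)
          (by
            intro r hr
            simp only [mem_Icc] at hr
            rw [revf_apply, hεl ((t:ℤ) - r) ⟨by omega, by omega⟩, revf_apply, cmpf_apply,
              show (t:ℤ) - ((t:ℤ) - r) = r by ring])
          (by rw [revf_apply, sub_zero, ← hclosed, hδ0])
        have := hun ⟨by positivity, le_rfl⟩
        rw [hδt, revf_apply, sub_self, hε0] at this
        exact hx'ney this.symm
end
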